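/- Let φ solve φ' = -2Lφ - γ(φ² + 1) on [0, τ*] with L ≥ 0, γ > 0. Suppose V : ℝⁿ → ℝ is C¹ with ⟨∇V(x), f(x,e)⟩ ≤ -ρ₀(x) - H(x)² - θ(W(e)) + γ²·W(e)², and W : ℝᵐ → ℝ₊ is C¹ with ⟨∇W(e), g(x,e)⟩ ≤ L·W(e) + H(x). Define U(x,e,τ) = V(x) + γ·φ(τ)·W(e)². Then along any solution of ẋ = f(x,e), ė = g(x,e), τ̇ = 1 with τ ∈ [0, τ*], the derivative of U satisfies d/dt U ≤ -ρ₀(x) - θ(W(e)) - (H(x) - γ·φ(τ)·W(e))² ≤ -ρ₀(x) - θ(W(e)). -/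

import Mathlib

open Set

/-- Decrease of the Lyapunov function `U(x,e,τ) = V(x) + γ·φ(τ)·W(e)²` along
flows of the networked control system. -/
theorem lyapunov_flow_decrease
    {α β : Type*} (τs L γ : ℝ)
    (φ : ℝ → ℝ) (x : ℝ → α) (e : ℝ → β)
    (V H ρ₀ : α → ℝ) (W : β → ℝ) (θ : ℝ → ℝ)
    (dV dW : ℝ → ℝ)
    (hL : 0 ≤ L) (hγ : 0 < γ) (hτs : 0 < τs)
    (hφode : ∀ t ∈ Icc (0 : ℝ) τs,
      HasDerivAt φ (-2 * L * φ t - γ * ((φ t) ^ 2 + 1)) t)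
    (hφpos : ∀ t ∈ Icc (0 : ℝ) τs, 0 ≤ φ t)
    (hWpos : ∀ b, 0 ≤ W b)
    (hV : ∀ t ∈ Icc (0 : ℝ) τs, HasDerivAt (fun s => V (x s)) (dV t) t)
    (hVbound : ∀ t ∈ Icc (0 : ℝ) τs,
      dV t ≤ -ρ₀ (x t) - (H (x t)) ^ 2 - θ (W (e t)) + γ ^ 2 * (W (e t)) ^ 2)
    (hW : ∀ t ∈ Icc (0 : ℝ) τs, HasDerivAt (fun s => W (e s)) (dW t) t)
    (hWbound : ∀ t ∈ Icc (0 : ℝ) τs, dW t ≤ L * W (e t) + H (x t)) :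
    ∀ t ∈ Icc (0 : ℝ) τs, ∃ dU : ℝ,
      HasDerivAt (fun s => V (x s) + γ * φ s * (W (e s)) ^ 2) dU t ∧
      dU ≤ -ρ₀ (x t) - θ (W (e t)) - (H (x t) - γ * φ t * W (e t)) ^ 2 ∧
      dU ≤ -ρ₀ (x t) - θ (W (e t)) := by
  intro t ht
  have hφd := hφode t ht
  have hVd := hV t ht
  have hWd := hW t ht
  have hderiv : HasDerivAt (fun s => V (x s) + γ * φ s * (W (e s)) ^ 2)
      (dV t + (γ * ((-2 * L * φ t - γ * ((φ t) ^ 2 + 1)) * (W (e t)) ^ 2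
        + φ t * (2 * W (e t) * dW t)))) t := by
    have h1 : HasDerivAt (fun s => (W (e s)) ^ 2) (2 * W (e t) * dW t) t := by
      have := hWd.fun_pow 2
      simpa [mul_comm, mul_assoc, mul_left_comm] using this
    have h2 : HasDerivAt (fun s => φ s * (W (e s)) ^ 2)
        ((-2 * L * φ t - γ * ((φ t) ^ 2 + 1)) * (W (e t)) ^ 2
          + φ t * (2 * W (e t) * dW t)) t := hφd.mul h1
    have h3 := (h2.const_mul γ)
    have := hVd.fun_add h3
    exact this.congr_of_eventuallyEq (Filter.Eventually.of_forall fun s => by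
      show V (x s) + γ * φ s * W (e s) ^ 2 = V (x s) + γ * (φ s * W (e s) ^ 2)
      ring)
  refine ⟨_, hderiv, ?_, ?_⟩
  · have hVb := hVbound t ht
    have hWb := hWbound t ht
    have hφp := hφpos t ht
    have hWp := hWpos (e t)
    nlinarith [mul_nonneg (mul_nonneg hγ.le hφp) hWp, sq_nonneg (W (e t)),
      mul_le_mul_of_nonneg_left hWb (mul_nonneg (mul_nonneg hγ.le hφp) hWp)]
  · have hVb := hVbound t ht
    have hWb := hWbound t ht
    have hφp := hφpos t ht
    have hWp := hWpos (e t)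
    nlinarith [sq_nonneg (H (x t) - γ * φ t * W (e t)),
      mul_le_mul_of_nonneg_left hWb (mul_nonneg (mul_nonneg hγ.le hφp) hWp)]
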